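/- arXiv:1601.05515 — 3 statements merged into one kernel-verified Lean document; each statement's English description precedes it below -/
import Mathlib

section
/- Let k ≥ 3 be a fixed integer and (i₁, i₂, …, i_{k−1}) ∈ {0,1}^{k−1}. There is a constant c_k > 0 such that for all positive integers n₁, …, n_k with √n₁ + (−1)^{i₁}√n₂ + (−1)^{i₂}√n₃ + ⋯ + (−1)^{i_{k−1}}√n_k ≠ 0, one has |√n₁ + (−1)^{i₁}√n₂ + ⋯ + (−1)^{i_{k−1}}√n_k| ≥ c_k · max(n₁, n₂, …, n_k)^{−(2^{k−2} − 1/2)}. -/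
open Polynomial
open Polynomial

noncomputable def sums : List ℝ → Multiset ℝ
  | [] => {0}
  | a :: l => (sums l).map (· + a) + (sums l).map (· - a)

lemma sums_card (l : List ℝ) : Multiset.card (sums l) = 2 ^ l.length := by
  induction l with
  | nil => simp [sums]
  | cons a l ih => simp [sums, ih, pow_succ]; ring

lemma sums_neg (l : List ℝ) {x : ℝ} (hx : x ∈ sums l) : -x ∈ sums l := by
  induction l generalizing x with
  | nil => simp [sums] at hx ⊢; simp [hx]
  | cons a l ih =>
    simp only [sums, Multiset.mem_add, Multiset.mem_map] at hx ⊢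
    rcases hx with ⟨y, hy, rfl⟩ | ⟨y, hy, rfl⟩
    · right; exact ⟨-y, ih hy, by ring⟩
    · left; exact ⟨-y, ih hy, by ring⟩

lemma sums_abs_le (l : List ℝ) {x : ℝ} (hx : x ∈ sums l) :
    |x| ≤ (l.map (fun a => |a|)).sum := by
  induction l generalizing x with
  | nil => simp [sums] at hx ⊢; simp [hx]
  | cons a l ih =>
    simp only [sums, Multiset.mem_add, Multiset.mem_map] at hx
    simp only [List.map_cons, List.sum_cons]
    rcases hx with ⟨y, hy, rfl⟩ | ⟨y, hy, rfl⟩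
    · calc |y + a| ≤ |y| + |a| := abs_add_le _ _
        _ ≤ (l.map (fun a => |a|)).sum + |a| := by linarith [ih hy]
        _ = _ := by ring
    · calc |y - a| ≤ |y| + |a| := abs_sub _ _
        _ ≤ (l.map (fun a => |a|)).sum + |a| := by linarith [ih hy]
        _ = _ := by ring

lemma sum_mem_sums (l : List ℝ) (e : Fin l.length → ℝ)
    (he : ∀ i, e i = 1 ∨ e i = -1) :
    (∑ i, e i * l.get i) ∈ sums l := by
  induction l with
  | nil => simp [sums]
  | cons a l ih =>
    have h := ih (fun i => e i.succ) (fun i => he i.succ)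
    simp only [List.length_cons] at e he ⊢
    rw [Fin.sum_univ_succ]
    simp only [sums, Multiset.mem_add, Multiset.mem_map]
    rcases he 0 with h0 | h0
    · left
      exact ⟨_, h, by simp [h0]; ring⟩
    · right
      exact ⟨_, h, by simp [h0]; ring⟩

lemma decomp (a : ℝ) (m : ℤ) (hm : a ^ 2 = (m : ℝ)) (q : ℤ[X]) :
    ∃ u v : ℤ[X],
      (q.map (Int.castRingHom ℝ)).comp (X - C a)
        = u.map (Int.castRingHom ℝ) + C a * v.map (Int.castRingHom ℝ) ∧
      (q.map (Int.castRingHom ℝ)).comp (X + C a)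
        = u.map (Int.castRingHom ℝ) - C a * v.map (Int.castRingHom ℝ) := by
  have hA : (C a : ℝ[X]) ^ 2 = C ((m : ℤ) : ℝ) := by
    rw [← C_pow, hm]
  induction q using Polynomial.induction_on with
  | C c => exact ⟨C c, 0, by simp, by simp⟩
  | add p q hp hq =>
    obtain ⟨u1, v1, h1, h1'⟩ := hp
    obtain ⟨u2, v2, h2, h2'⟩ := hq
    refine ⟨u1 + u2, v1 + v2, ?_, ?_⟩
    · simp only [Polynomial.map_add, add_comp, h1, h2]; ring
    · simp only [Polynomial.map_add, add_comp, h1', h2']; ring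
  | monomial n c hc =>
    obtain ⟨u, v, h, h'⟩ := hc
    refine ⟨u * X - C m * v, v * X - u, ?_, ?_⟩
    · have e : ((C c * X ^ (n + 1) : ℤ[X]).map (Int.castRingHom ℝ))
          = ((C c * X ^ n : ℤ[X]).map (Int.castRingHom ℝ)) * X := by
        simp only [Polynomial.map_mul, Polynomial.map_pow, map_C, map_X, pow_succ]
        ring
      rw [e, mul_comp, X_comp, h]
      simp only [Polynomial.map_sub, Polynomial.map_mul, map_C, map_X, Int.coe_castRingHom]
      linear_combination (-(v.map (Int.castRingHom ℝ))) * hA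
    · have e : ((C c * X ^ (n + 1) : ℤ[X]).map (Int.castRingHom ℝ))
          = ((C c * X ^ n : ℤ[X]).map (Int.castRingHom ℝ)) * X := by
        simp only [Polynomial.map_mul, Polynomial.map_pow, map_C, map_X, pow_succ]
        ring
      rw [e, mul_comp, X_comp, h']
      simp only [Polynomial.map_sub, Polynomial.map_mul, map_C, map_X, Int.coe_castRingHom]
      linear_combination (-(v.map (Int.castRingHom ℝ))) * hA

lemma sums_prod_int (l : List ℝ) (hl : ∀ a ∈ l, ∃ m : ℤ, a ^ 2 = (m : ℝ)) :
    ∀ q : ℤ[X], ∃ r : ℤ[X],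
      ((sums l).map fun x => (q.map (Int.castRingHom ℝ)).comp (X - C x)).prod
        = r.map (Int.castRingHom ℝ) := by
  induction l with
  | nil =>
    intro q
    exact ⟨q, by simp [sums]⟩
  | cons a l ih =>
    intro q
    obtain ⟨m, hm⟩ := hl a List.mem_cons_self
    obtain ⟨u, v, h1, h2⟩ := decomp a m hm q
    obtain ⟨r, hr⟩ := ih (fun b hb => hl b (List.mem_cons_of_mem a hb)) (u ^ 2 - C m * v ^ 2)
    refine ⟨r, ?_⟩
    rw [← hr]
    have key : ∀ x : ℝ,
        (q.map (Int.castRingHom ℝ)).comp (X - C (x + a))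
          * (q.map (Int.castRingHom ℝ)).comp (X - C (x - a))
        = (((u ^ 2 - C m * v ^ 2).map (Int.castRingHom ℝ))).comp (X - C x) := by
      intro x
      have e1 : (X - C (x + a) : ℝ[X]) = (X - C a).comp (X - C x) := by
        simp [sub_comp]; ring
      have e2 : (X - C (x - a) : ℝ[X]) = (X + C a).comp (X - C x) := by
        simp [add_comp]; ring
      rw [e1, e2, ← comp_assoc, ← comp_assoc, ← mul_comp, h1, h2]
      congr 1
      simp only [Polynomial.map_sub, Polynomial.map_mul, Polynomial.map_pow, map_C,
        Int.coe_castRingHom]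
      have hA : (C a : ℝ[X]) ^ 2 = C ((m : ℤ) : ℝ) := by rw [← C_pow, hm]
      linear_combination (-((v.map (Int.castRingHom ℝ)) ^ 2)) * hA
    show ((sums (a :: l)).map fun x => (q.map (Int.castRingHom ℝ)).comp (X - C x)).prod = _
    rw [show sums (a :: l) = (sums l).map (· + a) + (sums l).map (· - a) from rfl]
    rw [Multiset.map_add, Multiset.prod_add, Multiset.map_map, Multiset.map_map,
      ← Multiset.prod_map_mul]
    congr 1
    apply Multiset.map_congr rfl
    intro x hx
    exact key x

lemma prod_abs_le (B : ℝ) (hB : 0 ≤ B) (s : Multiset ℝ) (h : ∀ x ∈ s, |x| ≤ B) :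
    |s.prod| ≤ B ^ Multiset.card s := by
  induction s using Multiset.induction_on with
  | empty => simp
  | cons a s ih =>
    simp only [Multiset.prod_cons, Multiset.card_cons, abs_mul, pow_succ]
    rw [mul_comm (B ^ _) B]
    exact mul_le_mul (h a (Multiset.mem_cons_self a s))
      (ih fun x hx => h x (Multiset.mem_cons_of_mem hx)) (abs_nonneg _)
      hB

lemma key_numeric (l : List ℝ) (hl : ∀ a ∈ l, ∃ m : ℤ, a ^ 2 = (m : ℝ))
    (B : ℝ) (hB : 1 ≤ B) (hbound : ∀ x ∈ sums l, |x| ≤ B)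
    (S : ℝ) (hS : S ∈ sums l) (hS0 : S ≠ 0) :
    1 ≤ B ^ (2 ^ l.length - 2) * S ^ 2 := by
  classical
  obtain ⟨r, hr⟩ := sums_prod_int l hl X
  simp only [Polynomial.map_X, X_comp] at hr
  set M := sums l with hM
  set M₀ := M.filter (fun x => ¬ x = 0) with hM₀
  set Z := M.filter (fun x => x = 0) with hZ
  have hsplit : Z + M₀ = M := Multiset.filter_add_not _ _
  have hZmap : Z.map (fun x : ℝ => X - C x) = Multiset.replicate (Multiset.card Z) X := by
    rw [Multiset.eq_replicate]
    constructor
    · simp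
    · intro b hb
      obtain ⟨x, hx, rfl⟩ := Multiset.mem_map.mp hb
      have : x = 0 := (Multiset.mem_filter.mp hx).2
      simp [this]
  -- the product over M
  have hP : (M.map fun x : ℝ => X - C x).prod
      = X ^ (Multiset.card Z) * (M₀.map fun x : ℝ => X - C x).prod := by
    rw [← hsplit, Multiset.map_add, Multiset.prod_add, hZmap, Multiset.prod_replicate]
  -- the coefficient
  have hcoeff : ((M.map fun x : ℝ => X - C x).prod).coeff (Multiset.card Z)
      = (M₀.map fun x : ℝ => -x).prod := by
    rw [hP]
    have := coeff_X_pow_mul ((M₀.map fun x : ℝ => X - C x).prod) (Multiset.card Z) 0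
    rw [zero_add] at this
    rw [this, coeff_zero_eq_eval_zero, eval_multiset_prod, Multiset.map_map]
    congr 1
    apply Multiset.map_congr rfl
    intro x hx
    simp
  have hne : (M₀.map fun x : ℝ => -x).prod ≠ 0 := by
    apply Multiset.prod_ne_zero
    simp only [Multiset.mem_map]
    rintro ⟨x, hx, hx0⟩
    exact (Multiset.mem_filter.mp hx).2 (by linarith [neg_eq_zero.mp hx0])
  have habs : 1 ≤ |(M₀.map fun x : ℝ => -x).prod| := by
    have : (M₀.map fun x : ℝ => -x).prod = ((r.coeff (Multiset.card Z) : ℤ) : ℝ) := by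
      rw [← hcoeff, hr, Polynomial.coeff_map, Int.coe_castRingHom]
    rw [this] at hne ⊢
    have : r.coeff (Multiset.card Z) ≠ 0 := by exact_mod_cast hne
    rw [← Int.cast_abs]
    exact_mod_cast Int.one_le_abs this
  -- prod of abs values
  have hprodabs : |(M₀.map fun x : ℝ => -x).prod| = |M₀.prod| := by
    have : (M₀.map fun x : ℝ => -x).prod = (-1) ^ Multiset.card M₀ * M₀.prod := by
      induction M₀ using Multiset.induction_on with
      | empty => simp
      | cons a s ih => simp [ih, pow_succ]; ring
    rw [this, abs_mul, abs_pow, abs_neg, abs_one, one_pow, one_mul]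
  rw [hprodabs] at habs
  -- split off S and -S
  have hSM₀ : S ∈ M₀ := Multiset.mem_filter.mpr ⟨hS, hS0⟩
  obtain ⟨s₁, hs₁⟩ := Multiset.exists_cons_of_mem hSM₀
  have hnegS : -S ∈ s₁ := by
    have h1 : -S ∈ M₀ := Multiset.mem_filter.mpr ⟨sums_neg l hS, by simpa using hS0⟩
    rw [hs₁, Multiset.mem_cons] at h1
    rcases h1 with h1 | h1
    · exact absurd h1 (by intro h; apply hS0; linarith [h])
    · exact h1
  obtain ⟨s₂, hs₂⟩ := Multiset.exists_cons_of_mem hnegS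
  have hprod : |M₀.prod| = S ^ 2 * |s₂.prod| := by
    rw [hs₁, hs₂, Multiset.prod_cons, Multiset.prod_cons]
    rw [show S * (-S * s₂.prod) = -(S^2 * s₂.prod) by ring, abs_neg, abs_mul, abs_of_nonneg (sq_nonneg S)]
  have hcard : Multiset.card s₂ ≤ 2 ^ l.length - 2 := by
    have h1 : Multiset.card M₀ ≤ Multiset.card M := by
      rw [← hsplit]; simp
    have h2 : Multiset.card M = 2 ^ l.length := sums_card l
    have h3 : Multiset.card M₀ = Multiset.card s₂ + 2 := by
      rw [hs₁, hs₂]; simp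
    omega
  have hs₂bound : |s₂.prod| ≤ B ^ (2 ^ l.length - 2) := by
    calc |s₂.prod| ≤ B ^ Multiset.card s₂ := by
          apply prod_abs_le B (by linarith) s₂
          intro x hx
          apply hbound
          have : x ∈ M₀ := by rw [hs₁, hs₂]; exact Multiset.mem_cons_of_mem (Multiset.mem_cons_of_mem hx)
          exact Multiset.mem_of_mem_filter this
      _ ≤ B ^ (2 ^ l.length - 2) := pow_le_pow_right₀ hB hcard
  calc (1:ℝ) ≤ |M₀.prod| := habs
    _ = S ^ 2 * |s₂.prod| := hprod
    _ ≤ S ^ 2 * B ^ (2 ^ l.length - 2) := by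
        exact mul_le_mul_of_nonneg_left hs₂bound (sq_nonneg S)
    _ = B ^ (2 ^ l.length - 2) * S ^ 2 := by ring

theorem sqrt_sum_lower_bound (k : ℕ) (hk : 3 ≤ k) (sgn : Fin k → ℝ)
    (h0 : sgn ⟨0, by omega⟩ = 1) (hsgn : ∀ j, sgn j = 1 ∨ sgn j = -1) :
    ∃ c : ℝ, 0 < c ∧ ∀ n : Fin k → ℕ+,
      (∑ j : Fin k, sgn j * Real.sqrt ((n j : ℕ))) ≠ 0 →
      c * ((Finset.univ.sup fun j : Fin k => (n j : ℕ) : ℕ) : ℝ) ^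
          (-((2 : ℝ) ^ (k - 2) - 1 / 2)) ≤
        |∑ j : Fin k, sgn j * Real.sqrt ((n j : ℕ))| := by
  set t : ℕ := 2 ^ (k - 1) - 1 with ht
  refine ⟨((k : ℝ) ^ t)⁻¹, by positivity, ?_⟩
  intro n hS0
  set S : ℝ := ∑ j : Fin k, sgn j * Real.sqrt ((n j : ℕ)) with hSdef
  set N : ℕ := Finset.univ.sup fun j : Fin k => (n j : ℕ) with hNdef
  have hN1 : 1 ≤ N := by
    exact le_trans (n ⟨0, by omega⟩).one_le
      (Finset.le_sup (f := fun j : Fin k => (n j : ℕ)) (Finset.mem_univ _))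
  have hsqrtN : 1 ≤ Real.sqrt N := by
    rw [show (1:ℝ) = Real.sqrt 1 by simp]
    exact Real.sqrt_le_sqrt (by exact_mod_cast hN1)
  set B : ℝ := k * Real.sqrt N with hBdef
  have hB : 1 ≤ B := by
    have hk3 : (3:ℝ) ≤ k := by exact_mod_cast hk
    nlinarith
  have hlen : (List.ofFn (fun j : Fin k => Real.sqrt ((n j : ℕ)))).length = k :=
    List.length_ofFn
  have hl : ∀ a ∈ List.ofFn (fun j : Fin k => Real.sqrt ((n j : ℕ))),
      ∃ m : ℤ, a ^ 2 = (m : ℝ) := by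
    intro a ha
    rw [List.mem_ofFn] at ha
    obtain ⟨j, rfl⟩ := ha
    exact ⟨(n j : ℕ), by rw [Real.sq_sqrt (by positivity)]; push_cast; ring⟩
  have hbound : ∀ x ∈ sums (List.ofFn (fun j : Fin k => Real.sqrt ((n j : ℕ)))),
      |x| ≤ B := by
    intro x hx
    refine le_trans (sums_abs_le _ hx) ?_
    rw [List.map_ofFn, List.sum_ofFn]
    calc (∑ j : Fin k, |Real.sqrt ((n j : ℕ))|)
        ≤ ∑ j : Fin k, Real.sqrt N := by
          apply Finset.sum_le_sum
          intro j _
          rw [abs_of_nonneg (Real.sqrt_nonneg _)]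
          apply Real.sqrt_le_sqrt
          exact_mod_cast Finset.le_sup (f := fun j : Fin k => (n j : ℕ)) (Finset.mem_univ j)
      _ = B := by simp [hBdef, mul_comm]
  have hSmem : S ∈ sums (List.ofFn (fun j : Fin k => Real.sqrt ((n j : ℕ)))) := by
    have := sum_mem_sums (List.ofFn (fun j : Fin k => Real.sqrt ((n j : ℕ))))
      (fun i => sgn (Fin.cast hlen i)) (fun i => hsgn _)
    convert this using 1
    rw [hSdef]
    refine Fintype.sum_equiv (finCongr hlen.symm) _ _ ?_
    intro j
    simp only [finCongr_apply, List.get_ofFn]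
    rfl
  have hkey := key_numeric _ hl B hB hbound S hSmem hS0
  simp only [List.length_ofFn] at hkey
  -- from 1 ≤ B^(2^k-2) * S^2 deduce 1 ≤ B^t * |S|
  have h2t : 2 * t = 2 ^ k - 2 := by
    have : 2 * 2 ^ (k - 1) = 2 ^ k := by
      rw [← pow_succ']
      congr 1
      omega
    omega
  have hBS : 1 ≤ B ^ t * |S| := by
    have hsq : 1 ≤ (B ^ t * |S|) ^ 2 := by
      have : (B ^ t * |S|) ^ 2 = B ^ (2 * t) * S ^ 2 := by
        rw [mul_pow, ← pow_mul, sq_abs, mul_comm t 2]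
      rw [this, h2t]
      exact hkey
    nlinarith [mul_nonneg (pow_nonneg (by linarith : (0:ℝ) ≤ B) t) (abs_nonneg S)]
  -- rewrite the rpow
  have hNc : (1:ℝ) ≤ (N : ℝ) := by exact_mod_cast hN1
  have hexp : -((2 : ℝ) ^ (k - 2) - 1 / 2) = -((t : ℝ) / 2) := by
    have h1 : ((t : ℝ)) = 2 ^ (k - 1) - 1 := by
      rw [ht]
      push_cast [Nat.cast_sub (Nat.one_le_two_pow)]
      ring
    have h2 : (2:ℝ) ^ (k - 1) = 2 * 2 ^ (k - 2) := by
      rw [← pow_succ']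
      congr 1
      omega
    rw [h1, h2]
    ring
  have hrpow : ((N : ℝ)) ^ (-((2 : ℝ) ^ (k - 2) - 1 / 2)) = ((Real.sqrt N) ^ t)⁻¹ := by
    rw [hexp, Real.rpow_neg (by linarith)]
    congr 1
    have hs : (Real.sqrt N) ^ t = ((N:ℝ) ^ ((1:ℝ)/2)) ^ (t : ℝ) := by
      rw [Real.sqrt_eq_rpow, Real.rpow_natCast]
    rw [hs, ← Real.rpow_mul (by linarith)]
    congr 1
    ring
  rw [hrpow]
  have hBt : 0 < B ^ t := pow_pos (by linarith) t
  have : ((k : ℝ) ^ t)⁻¹ * ((Real.sqrt N) ^ t)⁻¹ = (B ^ t)⁻¹ := by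
    rw [hBdef, mul_pow, mul_inv]
  rw [this]
  calc (B ^ t)⁻¹ = (B ^ t)⁻¹ * 1 := (mul_one _).symm
    _ ≤ (B ^ t)⁻¹ * (B ^ t * |S|) := by
        apply mul_le_mul_of_nonneg_left hBS (by positivity)
    _ = |S| := by field_simp
end

section
/- There is an absolute constant C > 0 such that for every real N ≥ 2, ∫_0^{N^{1/2}} |S(x;N)|² dx ≤ C·N^{3/2}·log N. -/
open MeasureTheory

set_option maxHeartbeats 1000000

/-- The exponential sum `S(x; N) = Σ_{N < n ≤ 2N} e(x√n)`. -/
noncomputable def expSum (x N : ℝ) : ℂ :=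
  ∑ n ∈ Finset.Ioc ⌊N⌋₊ ⌊2 * N⌋₊,
    Complex.exp (2 * Real.pi * x * Real.sqrt n * Complex.I)

private lemma abs_sq_expSum (x N : ℝ) :
    ‖expSum x N‖ ^ 2 =
      ∑ n ∈ Finset.Ioc ⌊N⌋₊ ⌊2 * N⌋₊, ∑ m ∈ Finset.Ioc ⌊N⌋₊ ⌊2 * N⌋₊,
        Real.cos (2 * Real.pi * (Real.sqrt n - Real.sqrt m) * x) := by
  have h : (‖expSum x N‖ : ℝ) ^ 2
      = ((expSum x N) * (starRingEnd ℂ) (expSum x N)).re := by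
    rw [Complex.mul_conj]
    simp [Complex.sq_norm]
  rw [h]
  unfold expSum
  rw [map_sum, Finset.sum_mul_sum, Complex.re_sum]
  refine Finset.sum_congr rfl fun n _ => ?_
  rw [Complex.re_sum]
  refine Finset.sum_congr rfl fun m _ => ?_
  rw [← Complex.exp_conj, ← Complex.exp_add]
  have harg : 2 * (Real.pi : ℂ) * (x : ℂ) * (Real.sqrt n : ℂ) * Complex.I +
      (starRingEnd ℂ) (2 * (Real.pi : ℂ) * (x : ℂ) * (Real.sqrt m : ℂ) * Complex.I)
      = ((2 * Real.pi * (Real.sqrt n - Real.sqrt m) * x : ℝ) : ℂ) * Complex.I := by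
    simp only [map_mul, Complex.conj_I, Complex.conj_ofReal, map_ofNat]
    push_cast
    ring
  rw [harg, Complex.exp_ofReal_mul_I_re]

private lemma inner_sum_bound (a b n : ℕ) (hn : n ∈ Finset.Ioc a b) :
    ∑ m ∈ (Finset.Ioc a b).erase n, |(n : ℝ) - (m : ℝ)|⁻¹
      ≤ 2 * (1 + Real.log (b - a : ℕ)) := by
  obtain ⟨han, hnb⟩ := Finset.mem_Ioc.mp hn
  have hH : ∑ k ∈ Finset.Icc 1 (b - a), ((k : ℝ))⁻¹ ≤ 1 + Real.log (b - a : ℕ) := by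
    have h := harmonic_le_one_add_log (b - a)
    rw [harmonic_eq_sum_Icc] at h
    push_cast at h
    exact h
  have key : ∀ (s : Finset ℕ) (φ : ℕ → ℕ),
      (∀ m ∈ s, ∀ m' ∈ s, φ m = φ m' → m = m') →
      (∀ m ∈ s, φ m ∈ Finset.Icc 1 (b - a)) →
      (∀ m ∈ s, |(n : ℝ) - (m : ℝ)|⁻¹ = ((φ m : ℕ) : ℝ)⁻¹) →
      ∑ m ∈ s, |(n : ℝ) - (m : ℝ)|⁻¹ ≤ 1 + Real.log (b - a : ℕ) := by
    intro s φ hinj hmem heq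
    calc ∑ m ∈ s, |(n : ℝ) - (m : ℝ)|⁻¹ = ∑ m ∈ s, ((φ m : ℕ) : ℝ)⁻¹ :=
          Finset.sum_congr rfl heq
      _ = ∑ k ∈ s.image φ, ((k : ℕ) : ℝ)⁻¹ := (Finset.sum_image (f := fun k : ℕ => ((k:ℝ))⁻¹) (g := φ) hinj).symm
      _ ≤ ∑ k ∈ Finset.Icc 1 (b - a), ((k : ℕ) : ℝ)⁻¹ :=
          Finset.sum_le_sum_of_subset_of_nonneg
            (fun k hk => by
              obtain ⟨m, hm, rfl⟩ := Finset.mem_image.mp hk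
              exact hmem m hm)
            (fun k _ _ => by positivity)
      _ ≤ 1 + Real.log (b - a : ℕ) := hH
  have hsplit : (Finset.Ioc a b).erase n
      = (Finset.Ioc a b).filter (· < n) ∪ (Finset.Ioc a b).filter (n < ·) := by
    ext m
    simp only [Finset.mem_erase, Finset.mem_union, Finset.mem_filter, Finset.mem_Ioc]
    omega
  have hdisj : Disjoint ((Finset.Ioc a b).filter (· < n))
      ((Finset.Ioc a b).filter (n < ·)) := by
    rw [Finset.disjoint_left]
    intro m h1 h2
    simp only [Finset.mem_filter] at h1 h2
    omega
  rw [hsplit, Finset.sum_union hdisj]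
  have h1 : ∑ m ∈ (Finset.Ioc a b).filter (· < n), |(n : ℝ) - (m : ℝ)|⁻¹
      ≤ 1 + Real.log (b - a : ℕ) := by
    refine key _ (fun m => n - m) ?_ ?_ ?_
    · intro m hm m' hm' h
      simp only [Finset.mem_filter, Finset.mem_Ioc] at hm hm'
      omega
    · intro m hm
      simp only [Finset.mem_filter, Finset.mem_Ioc] at hm
      simp only [Finset.mem_Icc]
      omega
    · intro m hm
      simp only [Finset.mem_filter, Finset.mem_Ioc] at hm
      have hlt : m < n := hm.2
      rw [Nat.cast_sub hlt.le, abs_of_pos]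
      exact sub_pos.mpr (by exact_mod_cast hlt)
  have h2 : ∑ m ∈ (Finset.Ioc a b).filter (n < ·), |(n : ℝ) - (m : ℝ)|⁻¹
      ≤ 1 + Real.log (b - a : ℕ) := by
    refine key _ (fun m => m - n) ?_ ?_ ?_
    · intro m hm m' hm' h
      simp only [Finset.mem_filter, Finset.mem_Ioc] at hm hm'
      omega
    · intro m hm
      simp only [Finset.mem_filter, Finset.mem_Ioc] at hm
      simp only [Finset.mem_Icc]
      omega
    · intro m hm
      simp only [Finset.mem_filter, Finset.mem_Ioc] at hm
      have hlt : n < m := hm.2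
      rw [Nat.cast_sub hlt.le, abs_of_neg, neg_sub]
      exact sub_neg.mpr (by exact_mod_cast hlt)
  linarith

private lemma term_bound (X c : ℝ) (hc : c ≠ 0) :
    (∫ x in (0 : ℝ)..X, Real.cos (c * x)) ≤ |c|⁻¹ := by
  rw [intervalIntegral.integral_comp_mul_left Real.cos hc, mul_zero, integral_cos,
    Real.sin_zero, sub_zero, smul_eq_mul]
  calc c⁻¹ * Real.sin (c * X) ≤ |c⁻¹ * Real.sin (c * X)| := le_abs_self _
    _ = |c|⁻¹ * |Real.sin (c * X)| := by rw [abs_mul, abs_inv]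
    _ ≤ |c|⁻¹ * 1 := by
        gcongr
        exact Real.abs_sin_le_one _
    _ = |c|⁻¹ := mul_one _

theorem expSum_mean_square :
    ∃ C : ℝ, 0 < C ∧ ∀ N : ℝ, 2 ≤ N →
      (∫ x in (0 : ℝ)..(N ^ ((1 : ℝ) / 2)), ‖expSum x N‖ ^ 2) ≤
        C * N ^ ((3 : ℝ) / 2) * Real.log N := by
  refine ⟨100, by norm_num, fun N hN => ?_⟩
  have hN0 : (0 : ℝ) < N := by linarith
  have hXrpow : N ^ ((1 : ℝ) / 2) = Real.sqrt N := (Real.sqrt_eq_rpow N).symm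
  have h32 : N ^ ((3 : ℝ) / 2) = N * Real.sqrt N := by
    rw [show (3 : ℝ) / 2 = 1 + 1 / 2 by norm_num, Real.rpow_add hN0, Real.rpow_one,
      ← Real.sqrt_eq_rpow]
  rw [hXrpow, h32]
  simp_rw [abs_sq_expSum]
  set a := ⌊N⌋₊ with ha
  set b := ⌊2 * N⌋₊ with hb
  set X := Real.sqrt N with hXdef
  have hX0 : 0 < X := Real.sqrt_pos.mpr hN0
  have hbN : (b : ℝ) ≤ 2 * N := Nat.floor_le (by linarith)
  have ha2 : 2 ≤ a := Nat.le_floor (by exact_mod_cast hN)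
  have hab : 2 * a ≤ b := Nat.le_floor (by
    push_cast
    have := Nat.floor_le hN0.le
    linarith)
  have hK2 : 2 ≤ b - a := by omega
  -- interchange integral and sums
  rw [intervalIntegral.integral_finset_sum (fun n _ => by
    apply Continuous.intervalIntegrable
    fun_prop)]
  have hswap : ∀ n ∈ Finset.Ioc a b,
      (∫ x in (0 : ℝ)..X, ∑ m ∈ Finset.Ioc a b,
          Real.cos (2 * Real.pi * (Real.sqrt n - Real.sqrt m) * x))
        = ∑ m ∈ Finset.Ioc a b, ∫ x in (0 : ℝ)..X,
            Real.cos (2 * Real.pi * (Real.sqrt n - Real.sqrt m) * x) := by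
    intro n _
    exact intervalIntegral.integral_finset_sum (fun m _ => by
      apply Continuous.intervalIntegrable
      fun_prop)
  rw [Finset.sum_congr rfl hswap]
  -- per n bound
  set L := Real.log (b - a : ℕ) with hL
  have perN : ∀ n ∈ Finset.Ioc a b,
      (∑ m ∈ Finset.Ioc a b, ∫ x in (0 : ℝ)..X,
          Real.cos (2 * Real.pi * (Real.sqrt n - Real.sqrt m) * x))
        ≤ X + Real.sqrt N * (2 * (1 + L)) := by
    intro n hn
    rw [← Finset.add_sum_erase _ _ hn]
    have hdiag : (∫ x in (0 : ℝ)..X,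
        Real.cos (2 * Real.pi * (Real.sqrt n - Real.sqrt n) * x)) = X := by
      simp [sub_self]
    rw [hdiag]
    have hoff : ∀ m ∈ (Finset.Ioc a b).erase n,
        (∫ x in (0 : ℝ)..X, Real.cos (2 * Real.pi * (Real.sqrt n - Real.sqrt m) * x))
          ≤ Real.sqrt N * |(n : ℝ) - (m : ℝ)|⁻¹ := by
      intro m hm
      have hmn : m ≠ n := (Finset.mem_erase.mp hm).1
      have hmIoc := (Finset.mem_erase.mp hm).2
      have hnm : (n : ℝ) ≠ (m : ℝ) := by exact_mod_cast (Ne.symm hmn)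
      have hsne : Real.sqrt n - Real.sqrt m ≠ 0 := by
        intro h
        exact hnm ((Real.sqrt_inj (Nat.cast_nonneg n) (Nat.cast_nonneg m)).mp
          (sub_eq_zero.mp h))
      have hc : 2 * Real.pi * (Real.sqrt n - Real.sqrt m) ≠ 0 :=
        mul_ne_zero (by positivity) hsne
      refine (term_bound X _ hc).trans ?_
      -- now show |c|⁻¹ ≤ √N / |n - m|
      set A := |Real.sqrt n - Real.sqrt m| with hA
      have hA0 : 0 < A := abs_pos.mpr hsne
      have hB0 : 0 < |(n : ℝ) - (m : ℝ)| := abs_pos.mpr (sub_ne_zero.mpr hnm)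
      have habs : |2 * Real.pi * (Real.sqrt n - Real.sqrt m)| = 2 * Real.pi * A := by
        rw [abs_mul, abs_of_pos (by positivity : (0:ℝ) < 2 * Real.pi)]
      rw [habs]
      -- B = A * (√n + √m)
      have hBA : |(n : ℝ) - (m : ℝ)| = A * (Real.sqrt n + Real.sqrt m) := by
        have hfac : (Real.sqrt n - Real.sqrt m) * (Real.sqrt n + Real.sqrt m)
            = (n : ℝ) - (m : ℝ) := by
          have h1 : Real.sqrt (n : ℝ) ^ 2 = (n : ℝ) := Real.sq_sqrt (Nat.cast_nonneg n)
          have h2 : Real.sqrt (m : ℝ) ^ 2 = (m : ℝ) := Real.sq_sqrt (Nat.cast_nonneg m)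
          nlinarith [h1, h2]
        rw [← hfac, abs_mul, abs_of_nonneg (by positivity :
          (0:ℝ) ≤ Real.sqrt n + Real.sqrt m)]
      have hsum : Real.sqrt n + Real.sqrt m ≤ 2 * Real.pi * Real.sqrt N := by
        have h2N : Real.sqrt 2 ≤ 1.5 := by
          rw [show (1.5 : ℝ) = Real.sqrt (1.5 ^ 2) from (Real.sqrt_sq (by norm_num)).symm]
          exact Real.sqrt_le_sqrt (by norm_num)
        have hsM : ∀ k : ℕ, k ∈ Finset.Ioc a b → Real.sqrt k ≤ 1.5 * Real.sqrt N := by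
          intro k hk
          have hkb : (k : ℝ) ≤ (b : ℝ) := by
            exact_mod_cast (Finset.mem_Ioc.mp hk).2
          have : Real.sqrt k ≤ Real.sqrt (2 * N) := Real.sqrt_le_sqrt (by linarith)
          rw [Real.sqrt_mul (by norm_num) N] at this
          nlinarith [Real.sqrt_nonneg N]
        have h3pi : (3 : ℝ) ≤ 2 * Real.pi := by
          have := Real.pi_gt_three
          linarith
        have hn' := hsM n hn
        have hm' := hsM m hmIoc
        nlinarith [Real.sqrt_nonneg N]
      -- conclude
      have hBle : |(n : ℝ) - (m : ℝ)| ≤ 2 * Real.pi * A * Real.sqrt N := by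
        rw [hBA]
        nlinarith [hA0.le]
      rw [inv_le_iff_one_le_mul₀ (by positivity)]
      have hrw : Real.sqrt N * |(n : ℝ) - (m : ℝ)|⁻¹ * (2 * Real.pi * A)
          = (Real.sqrt N * (2 * Real.pi * A)) / |(n : ℝ) - (m : ℝ)| := by
        field_simp
      rw [hrw, le_div_iff₀ hB0, one_mul]
      nlinarith [hBle]
    calc X + ∑ m ∈ (Finset.Ioc a b).erase n,
          ∫ x in (0 : ℝ)..X, Real.cos (2 * Real.pi * (Real.sqrt n - Real.sqrt m) * x)
        ≤ X + ∑ m ∈ (Finset.Ioc a b).erase n,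
            Real.sqrt N * |(n : ℝ) - (m : ℝ)|⁻¹ := by
          gcongr with m hm
          exact hoff m hm
      _ = X + Real.sqrt N * ∑ m ∈ (Finset.Ioc a b).erase n, |(n : ℝ) - (m : ℝ)|⁻¹ := by
          rw [Finset.mul_sum]
      _ ≤ X + Real.sqrt N * (2 * (1 + L)) :=
          add_le_add_right (mul_le_mul_of_nonneg_left (inner_sum_bound a b n hn)
            (Real.sqrt_nonneg N)) X
  -- sum over n
  have hcard : (Finset.Ioc a b).card = b - a := Nat.card_Ioc a b
  have htotal : (∑ n ∈ Finset.Ioc a b, ∑ m ∈ Finset.Ioc a b,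
      ∫ x in (0 : ℝ)..X, Real.cos (2 * Real.pi * (Real.sqrt n - Real.sqrt m) * x))
        ≤ ((b - a : ℕ) : ℝ) * (X + Real.sqrt N * (2 * (1 + L))) := by
    calc (∑ n ∈ Finset.Ioc a b, ∑ m ∈ Finset.Ioc a b,
        ∫ x in (0 : ℝ)..X, Real.cos (2 * Real.pi * (Real.sqrt n - Real.sqrt m) * x))
        ≤ ∑ n ∈ Finset.Ioc a b, (X + Real.sqrt N * (2 * (1 + L))) :=
          Finset.sum_le_sum perN
      _ = ((b - a : ℕ) : ℝ) * (X + Real.sqrt N * (2 * (1 + L))) := by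
          rw [Finset.sum_const, hcard, nsmul_eq_mul]
  refine htotal.trans ?_
  -- final arithmetic
  have hKle : ((b - a : ℕ) : ℝ) ≤ 2 * N := le_trans (by exact_mod_cast Nat.sub_le b a) hbN
  have hlog2 : (0.6931471803 : ℝ) < Real.log 2 := Real.log_two_gt_d9
  have hlogN2 : Real.log 2 ≤ Real.log N := (Real.log_le_log_iff (by norm_num) hN0).mpr hN
  have hLle : L ≤ 2 * Real.log N := by
    have h1 : L ≤ Real.log (2 * N) := by
      rw [hL]
      refine (Real.log_le_log_iff (by exact_mod_cast hK2.trans' (by norm_num) : (0:ℝ) < _) (by linarith)).mpr ?_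
      exact le_trans (by exact_mod_cast Nat.sub_le b a) hbN
    rw [Real.log_mul (by norm_num) (ne_of_gt hN0)] at h1
    linarith
  have hL0 : 0 ≤ L := Real.log_nonneg (by exact_mod_cast hK2.trans' (by norm_num))
  have hlogN : (0.69 : ℝ) ≤ Real.log N := by linarith
  have hXN : X = Real.sqrt N := rfl
  have hsqN : Real.sqrt N * Real.sqrt N = N := Real.mul_self_sqrt hN0.le
  have hsq0 : 0 < Real.sqrt N := hX0
  have step : ((b - a : ℕ) : ℝ) * (X + Real.sqrt N * (2 * (1 + L)))
      ≤ (2 * N) * (Real.sqrt N * (9 * Real.log N)) := by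
    have h1 : X + Real.sqrt N * (2 * (1 + L)) ≤ Real.sqrt N * (9 * Real.log N) := by
      rw [hXN]
      nlinarith [hsq0.le]
    have h2 : 0 ≤ X + Real.sqrt N * (2 * (1 + L)) := by positivity
    have h3 : (0 : ℝ) ≤ (b - a : ℕ) := Nat.cast_nonneg _
    nlinarith [mul_le_mul hKle h1 h2 (by linarith : (0:ℝ) ≤ 2 * N)]
  refine step.trans ?_
  nlinarith [mul_pos (mul_pos hN0 hsq0) (lt_of_lt_of_le (by norm_num : (0:ℝ) < 0.69) hlogN)]
end

section
/- There is an absolute constant C > 0 such that for all T ≥ 2, Σ_{m < n ≤ T} d(n)·d(m)/((n·m)^{3/4}·(√n − √m)) ≤ C·(log T)^5, where the sum is over pairs of positive integers m < n ≤ T. -/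
open Finset Real

noncomputable def harm (N : ℕ) : ℝ := ∑ k ∈ Finset.Icc 1 N, (1:ℝ)/k

lemma harm_nonneg (N : ℕ) : 0 ≤ harm N :=
  Finset.sum_nonneg fun k _ => by positivity

lemma harm_mono {N M : ℕ} (h : N ≤ M) : harm N ≤ harm M :=
  Finset.sum_le_sum_of_subset_of_nonneg (Finset.Icc_subset_Icc_right h)
    (fun _ _ _ => by positivity)

lemma harm_le (N : ℕ) : harm N ≤ 1 + Real.log N := by
  have h := harmonic_le_one_add_log N
  rw [harmonic_eq_sum_Icc] at h
  refine le_trans (le_of_eq ?_) h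
  push_cast
  simp [harm, one_div]

lemma sum_mult (g N : ℕ) (hg : 1 ≤ g) :
    ∑ a ∈ Finset.Icc 1 N, (if g ∣ a then (1:ℝ)/a else 0) ≤ harm N / g := by
  rw [← Finset.sum_filter]
  have key : ∑ a ∈ (Finset.Icc 1 N).filter (fun a => g ∣ a), (1:ℝ)/a
      = ∑ k ∈ Finset.Icc 1 (N / g), 1/((g:ℝ)*k) := by
    refine Finset.sum_nbij' (fun a => a / g) (fun k => g * k) ?_ ?_ ?_ ?_ ?_
    · intro a ha
      simp only [Finset.mem_filter, Finset.mem_Icc] at ha ⊢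
      obtain ⟨⟨h1, h2⟩, hd⟩ := ha
      exact ⟨Nat.one_le_div_iff hg |>.2 (Nat.le_of_dvd h1 hd), Nat.div_le_div_right h2⟩
    · intro k hk
      simp only [Finset.mem_filter, Finset.mem_Icc] at hk ⊢
      refine ⟨⟨Nat.one_le_iff_ne_zero.2 (Nat.mul_ne_zero (by omega) (by omega)), ?_⟩, Dvd.intro k rfl⟩
      calc g * k ≤ g * (N / g) := Nat.mul_le_mul_left g hk.2
        _ ≤ N := Nat.mul_div_le N g
    · intro a ha
      simp only [Finset.mem_filter] at ha
      exact Nat.mul_div_cancel' ha.2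
    · intro k _
      exact Nat.mul_div_cancel_left k hg
    · intro a ha
      simp only [Finset.mem_filter] at ha
      rw [← Nat.cast_mul, Nat.mul_div_cancel' ha.2]
  rw [key]
  have : ∑ k ∈ Finset.Icc 1 (N / g), 1/((g:ℝ)*k) = (1/g) * harm (N / g) := by
    rw [harm, Finset.mul_sum]
    refine Finset.sum_congr rfl fun k _ => by ring
  rw [this]
  have h2 : harm N / (g:ℝ) = (1/(g:ℝ)) * harm N := by ring
  rw [h2]
  exact mul_le_mul_of_nonneg_left (harm_mono (Nat.div_le_self N g)) (by positivity)

/-- The divisor function `d(n)`. -/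
def divfun (n : ℕ) : ℕ := n.divisors.card

lemma divsum_le (N : ℕ) :
    ∑ n ∈ Finset.Icc 1 N, (divfun n : ℝ)^2 / n ≤ harm N ^ 4 := by
  have hdiv : ∀ n ∈ Finset.Icc 1 N, (Finset.Icc 1 N).filter (· ∣ n) = n.divisors := by
    intro n hn
    simp only [Finset.mem_Icc] at hn
    ext a
    simp only [Finset.mem_filter, Finset.mem_Icc, Nat.mem_divisors]
    constructor
    · rintro ⟨_, h⟩; exact ⟨h, by omega⟩
    · rintro ⟨h, _⟩
      have h1 : 0 < a := Nat.pos_of_dvd_of_pos h (by omega)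
      exact ⟨⟨h1, le_trans (Nat.le_of_dvd (by omega) h) hn.2⟩, h⟩
  have hb : ∀ n ∈ Finset.Icc 1 N,
      ∑ b ∈ Finset.Icc 1 N, (if b ∣ n then (1:ℝ) else 0) = (divfun n : ℝ) := by
    intro n hn
    rw [Finset.sum_boole, hdiv n hn, divfun]
  have step1 : ∀ n ∈ Finset.Icc 1 N, (divfun n : ℝ)^2/n
      = ∑ a ∈ Finset.Icc 1 N, ∑ b ∈ Finset.Icc 1 N,
        ((if a ∣ n then (1:ℝ) else 0) * (if b ∣ n then (1:ℝ) else 0)) * (1/(n:ℝ)) := by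
    intro n hn
    have e1 : (divfun n : ℝ)^2/n
        = ((∑ a ∈ Finset.Icc 1 N, (if a ∣ n then (1:ℝ) else 0)) *
           (∑ b ∈ Finset.Icc 1 N, (if b ∣ n then (1:ℝ) else 0))) * (1/(n:ℝ)) := by
      rw [hb n hn]; ring
    rw [e1, Finset.sum_mul_sum, Finset.sum_mul]
    exact Finset.sum_congr rfl fun a _ => by rw [Finset.sum_mul]
  rw [Finset.sum_congr rfl step1, Finset.sum_comm]
  have swap2 : ∀ a, (∑ n ∈ Finset.Icc 1 N, ∑ b ∈ Finset.Icc 1 N,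
        ((if a ∣ n then (1:ℝ) else 0) * (if b ∣ n then (1:ℝ) else 0)) * (1/(n:ℝ)))
      = ∑ b ∈ Finset.Icc 1 N, ∑ n ∈ Finset.Icc 1 N,
        ((if a ∣ n then (1:ℝ) else 0) * (if b ∣ n then (1:ℝ) else 0)) * (1/(n:ℝ)) :=
    fun a => Finset.sum_comm
  rw [Finset.sum_congr rfl fun a _ => swap2 a]
  -- now bound the inner n-sum for fixed (a, b)
  have key : ∀ a ∈ Finset.Icc 1 N, ∀ b ∈ Finset.Icc 1 N,
      (∑ n ∈ Finset.Icc 1 N,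
        ((if a ∣ n then (1:ℝ) else 0) * (if b ∣ n then (1:ℝ) else 0)) * (1/(n:ℝ)))
      ≤ harm N * ((Nat.gcd a b : ℝ)/((a:ℝ)*b)) := by
    intro a ha b hb'
    simp only [Finset.mem_Icc] at ha hb'
    have ha0 : (0:ℝ) < a := by exact_mod_cast ha.1
    have hb0 : (0:ℝ) < b := by exact_mod_cast hb'.1
    have hlcm : 1 ≤ Nat.lcm a b :=
      Nat.one_le_iff_ne_zero.2 (Nat.lcm_ne_zero (by omega) (by omega))
    have hlcm0 : (0:ℝ) < (Nat.lcm a b : ℝ) := by exact_mod_cast hlcm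
    have e : ∀ n : ℕ, ((if a ∣ n then (1:ℝ) else 0) * (if b ∣ n then (1:ℝ) else 0)) * (1/(n:ℝ))
        = if Nat.lcm a b ∣ n then (1:ℝ)/n else 0 := by
      intro n
      by_cases h1 : a ∣ n <;> by_cases h2 : b ∣ n <;>
        simp [h1, h2, Nat.lcm_dvd_iff]
    rw [Finset.sum_congr rfl fun n _ => e n]
    refine le_trans (sum_mult (Nat.lcm a b) N hlcm) ?_
    have hgl : (Nat.gcd a b : ℝ) * (Nat.lcm a b) = (a:ℝ)*b := by
      exact_mod_cast congrArg (Nat.cast (R := ℝ)) (Nat.gcd_mul_lcm a b)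
    have e2 : harm N / (Nat.lcm a b : ℝ) = harm N * ((Nat.gcd a b : ℝ)/((a:ℝ)*b)) := by
      rw [div_eq_mul_one_div (harm N)]
      congr 1
      rw [div_eq_div_iff (ne_of_gt hlcm0) (by positivity)]
      linarith [hgl]
    exact le_of_eq e2
  refine le_trans (Finset.sum_le_sum fun a ha =>
    Finset.sum_le_sum fun b hb' => key a ha b hb') ?_
  -- ∑_a ∑_b harm N * gcd/(a b) ≤ harm N ^ 4
  have gcdsum : ∑ a ∈ Finset.Icc 1 N, ∑ b ∈ Finset.Icc 1 N,
      (Nat.gcd a b : ℝ)/((a:ℝ)*b) ≤ harm N ^ 3 := by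
    have h1 : ∀ a ∈ Finset.Icc 1 N, ∀ b ∈ Finset.Icc 1 N,
        (Nat.gcd a b : ℝ)/((a:ℝ)*b)
        ≤ ∑ g ∈ Finset.Icc 1 N,
            (g:ℝ) * ((if g ∣ a then (1:ℝ)/a else 0) * (if g ∣ b then (1:ℝ)/b else 0)) := by
      intro a ha b hb'
      simp only [Finset.mem_Icc] at ha hb'
      have ha0 : (0:ℝ) < a := by exact_mod_cast ha.1
      have hb0 : (0:ℝ) < b := by exact_mod_cast hb'.1
      have e : ∀ g : ℕ,
          (g:ℝ) * ((if g ∣ a then (1:ℝ)/a else 0) * (if g ∣ b then (1:ℝ)/b else 0))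
          = (if g ∣ a ∧ g ∣ b then (g:ℝ) else 0) / ((a:ℝ)*b) := by
        intro g
        by_cases h1 : g ∣ a <;> by_cases h2 : g ∣ b <;>
          simp [h1, h2] <;> field_simp
      rw [Finset.sum_congr rfl fun g _ => e g, ← Finset.sum_div]
      have hgcd_le : (Nat.gcd a b : ℝ)
          ≤ ∑ g ∈ Finset.Icc 1 N, (if g ∣ a ∧ g ∣ b then (g:ℝ) else 0) := by
        have hmem : Nat.gcd a b ∈ Finset.Icc 1 N := by
          simp only [Finset.mem_Icc]
          exact ⟨Nat.pos_of_ne_zero (fun hz => by rw [Nat.gcd_eq_zero_iff] at hz; omega),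
            le_trans (Nat.le_of_dvd (by omega) (Nat.gcd_dvd_left a b)) ha.2⟩
        have := Finset.single_le_sum
          (f := fun g => if g ∣ a ∧ g ∣ b then (g:ℝ) else 0)
          (fun g _ => by by_cases h : g ∣ a ∧ g ∣ b <;> simp [h]) hmem
        simpa [Nat.gcd_dvd_left, Nat.gcd_dvd_right] using this
      exact div_le_div_of_nonneg_right hgcd_le (by positivity)
    refine le_trans (Finset.sum_le_sum fun a ha =>
      Finset.sum_le_sum fun b hb' => h1 a ha b hb') ?_
    -- swap g to the outside
    have swap1 : ∀ a, (∑ b ∈ Finset.Icc 1 N, ∑ g ∈ Finset.Icc 1 N,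
          (g:ℝ) * ((if g ∣ a then (1:ℝ)/a else 0) * (if g ∣ b then (1:ℝ)/b else 0)))
        = ∑ g ∈ Finset.Icc 1 N, ∑ b ∈ Finset.Icc 1 N,
          (g:ℝ) * ((if g ∣ a then (1:ℝ)/a else 0) * (if g ∣ b then (1:ℝ)/b else 0)) :=
      fun a => Finset.sum_comm
    rw [Finset.sum_congr rfl fun a _ => swap1 a, Finset.sum_comm]
    have factor : ∀ g : ℕ, (∑ a ∈ Finset.Icc 1 N, ∑ b ∈ Finset.Icc 1 N,
          (g:ℝ) * ((if g ∣ a then (1:ℝ)/a else 0) * (if g ∣ b then (1:ℝ)/b else 0)))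
        = (g:ℝ) * ((∑ a ∈ Finset.Icc 1 N, (if g ∣ a then (1:ℝ)/a else 0)) *
            (∑ b ∈ Finset.Icc 1 N, (if g ∣ b then (1:ℝ)/b else 0))) := by
      intro g
      rw [Finset.sum_mul_sum, Finset.mul_sum]
      exact Finset.sum_congr rfl fun a _ => by rw [Finset.mul_sum]
    rw [Finset.sum_congr rfl fun g _ => factor g]
    have bound : ∀ g ∈ Finset.Icc 1 N,
        (g:ℝ) * ((∑ a ∈ Finset.Icc 1 N, (if g ∣ a then (1:ℝ)/a else 0)) *
            (∑ b ∈ Finset.Icc 1 N, (if g ∣ b then (1:ℝ)/b else 0)))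
        ≤ harm N ^ 2 * (1/(g:ℝ)) := by
      intro g hg
      simp only [Finset.mem_Icc] at hg
      have hg0 : (0:ℝ) < g := by exact_mod_cast hg.1
      have hsn : (0:ℝ) ≤ ∑ b ∈ Finset.Icc 1 N, (if g ∣ b then (1:ℝ)/b else 0) :=
        Finset.sum_nonneg fun b _ => by by_cases h : g ∣ b <;> simp [h] <;> positivity
      have hm := sum_mult g N hg.1
      have step : (g:ℝ) * ((∑ a ∈ Finset.Icc 1 N, (if g ∣ a then (1:ℝ)/a else 0)) *
            (∑ b ∈ Finset.Icc 1 N, (if g ∣ b then (1:ℝ)/b else 0)))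
          ≤ (g:ℝ) * ((harm N / g) * (harm N / g)) := by
        refine mul_le_mul_of_nonneg_left ?_ (le_of_lt hg0)
        exact mul_le_mul hm hm hsn (le_trans (Finset.sum_nonneg fun b _ => by
          by_cases h : g ∣ b <;> simp [h] <;> positivity) hm)
      refine le_trans step (le_of_eq ?_)
      field_simp
    refine le_trans (Finset.sum_le_sum bound) ?_
    have : ∑ g ∈ Finset.Icc 1 N, harm N ^ 2 * (1/(g:ℝ)) = harm N ^ 2 * harm N := by
      rw [← Finset.mul_sum]; rfl
    rw [this]; ring_nf; rfl
  have final : ∑ a ∈ Finset.Icc 1 N, ∑ b ∈ Finset.Icc 1 N,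
      harm N * ((Nat.gcd a b : ℝ)/((a:ℝ)*b))
      = harm N * ∑ a ∈ Finset.Icc 1 N, ∑ b ∈ Finset.Icc 1 N,
        (Nat.gcd a b : ℝ)/((a:ℝ)*b) := by
    rw [Finset.mul_sum]
    exact Finset.sum_congr rfl fun a _ => by rw [Finset.mul_sum]
  rw [final]
  calc harm N * ∑ a ∈ Finset.Icc 1 N, ∑ b ∈ Finset.Icc 1 N, (Nat.gcd a b : ℝ)/((a:ℝ)*b)
      ≤ harm N * harm N ^ 3 := mul_le_mul_of_nonneg_left gcdsum (harm_nonneg N)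
    _ = harm N ^ 4 := by ring

set_option maxHeartbeats 1000000 in
lemma pointwise (n m : ℕ) (hm : 1 ≤ m) (hmn : m < n) :
    (divfun n : ℝ) * (divfun m : ℝ) /
      (((n : ℝ) * (m : ℝ)) ^ ((3 : ℝ) / 4) * (Real.sqrt n - Real.sqrt m))
    ≤ 2*(divfun n:ℝ)^2/((n:ℝ)*m) + 2*(divfun n:ℝ)^2/((n:ℝ)*((n:ℝ)-(m:ℝ)))
      + 2*(divfun m:ℝ)^2/((n:ℝ)*m) + 2*(divfun m:ℝ)^2/((m:ℝ)*((n:ℝ)-(m:ℝ))) := by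
  have hy1 : (1:ℝ) ≤ (m:ℝ) := by exact_mod_cast hm
  have hxy : (m:ℝ) < (n:ℝ) := by exact_mod_cast hmn
  set x := (n:ℝ) with hxdef
  set y := (m:ℝ) with hydef
  have hy0 : 0 < y := by linarith
  have hx0 : 0 < x := by linarith
  have hd : 0 < x - y := by linarith
  set dn := (divfun n : ℝ) with hdndef
  set dm := (divfun m : ℝ) with hdmdef
  have hdn : 0 ≤ dn := Nat.cast_nonneg _
  have hdm : 0 ≤ dm := Nat.cast_nonneg _
  have hsx0 : 0 < Real.sqrt x := Real.sqrt_pos.2 hx0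
  have hsqrt_lt : Real.sqrt y < Real.sqrt x := Real.sqrt_lt_sqrt (le_of_lt hy0) hxy
  have hs0 : 0 < Real.sqrt x - Real.sqrt y := by linarith
  have hsum_le : Real.sqrt x + Real.sqrt y ≤ 2 * Real.sqrt x := by linarith
  have hprod : (Real.sqrt x - Real.sqrt y) * (Real.sqrt x + Real.sqrt y) = x - y := by
    have h1 : Real.sqrt x * Real.sqrt x = x := Real.mul_self_sqrt (le_of_lt hx0)
    have h2 : Real.sqrt y * Real.sqrt y = y := Real.mul_self_sqrt (le_of_lt hy0)
    nlinarith [h1, h2]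
  have hsub_ge : (x - y) / (2 * Real.sqrt x) ≤ Real.sqrt x - Real.sqrt y := by
    rw [div_le_iff₀ (by positivity)]
    calc x - y = (Real.sqrt x - Real.sqrt y) * (Real.sqrt x + Real.sqrt y) := hprod.symm
      _ ≤ (Real.sqrt x - Real.sqrt y) * (2 * Real.sqrt x) :=
        mul_le_mul_of_nonneg_left hsum_le (le_of_lt hs0)
  have hmulpow : ((x*y) ^ ((3:ℝ)/4)) = x ^ ((3:ℝ)/4) * y ^ ((3:ℝ)/4) :=
    Real.mul_rpow (le_of_lt hx0) (le_of_lt hy0)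
  have hx14 : 0 < x ^ ((1:ℝ)/4) := Real.rpow_pos_of_pos hx0 _
  have hy34 : 0 < y ^ ((3:ℝ)/4) := Real.rpow_pos_of_pos hy0 _
  have hx34 : 0 < x ^ ((3:ℝ)/4) := Real.rpow_pos_of_pos hx0 _
  have hxq : x ^ ((3:ℝ)/4) = x ^ ((1:ℝ)/4) * Real.sqrt x := by
    rw [Real.sqrt_eq_rpow, ← Real.rpow_add hx0]; norm_num
  set E : ℝ := x ^ ((1:ℝ)/4) * y ^ ((3:ℝ)/4) * (x - y) / 2 with hEdef
  have hEpos : 0 < E := by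
    apply div_pos (mul_pos (mul_pos hx14 hy34) hd) two_pos
  have hden : E ≤ ((x*y) ^ ((3:ℝ)/4)) * (Real.sqrt x - Real.sqrt y) := by
    rw [hmulpow, hxq]
    calc E = (x ^ ((1:ℝ)/4) * Real.sqrt x * y ^ ((3:ℝ)/4)) * ((x - y) / (2 * Real.sqrt x)) := by
          field_simp; ring
      _ ≤ (x ^ ((1:ℝ)/4) * Real.sqrt x * y ^ ((3:ℝ)/4)) * (Real.sqrt x - Real.sqrt y) :=
          mul_le_mul_of_nonneg_left hsub_ge (by positivity)
      _ = x ^ ((1:ℝ)/4) * Real.sqrt x * y ^ ((3:ℝ)/4) * (Real.sqrt x - Real.sqrt y) := rfl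
  have step1 : dn * dm / (((x*y) ^ ((3:ℝ)/4)) * (Real.sqrt x - Real.sqrt y))
      ≤ dn * dm / E :=
    div_le_div_of_nonneg_left (by positivity) hEpos hden
  refine le_trans step1 ?_
  have hsq : 2 * (dn * dm) ≤ dn^2 + dm^2 := by nlinarith [sq_nonneg (dn - dm)]
  have hterm1 : 0 ≤ 2*dn^2/(x*y) := by positivity
  have hterm2 : 0 ≤ 2*dn^2/(x*(x-y)) := by
    apply div_nonneg (by positivity) (le_of_lt (mul_pos hx0 hd))
  have hterm3 : 0 ≤ 2*dm^2/(x*y) := by positivity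
  have hterm4 : 0 ≤ 2*dm^2/(y*(x-y)) := by
    apply div_nonneg (by positivity) (le_of_lt (mul_pos hy0 hd))
  rcases le_or_gt (2*y) x with hc | hc
  · -- y small: E ≥ x*y/4
    have hy14 : y ^ ((1:ℝ)/4) ≤ x ^ ((1:ℝ)/4) :=
      Real.rpow_le_rpow (le_of_lt hy0) (le_of_lt hxy) (by norm_num)
    have hyy : y ^ ((1:ℝ)/4) * y ^ ((3:ℝ)/4) = y := by
      rw [← Real.rpow_add hy0]; norm_num
    have hkey : y ≤ x ^ ((1:ℝ)/4) * y ^ ((3:ℝ)/4) := by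
      calc y = y ^ ((1:ℝ)/4) * y ^ ((3:ℝ)/4) := hyy.symm
        _ ≤ x ^ ((1:ℝ)/4) * y ^ ((3:ℝ)/4) :=
          mul_le_mul_of_nonneg_right hy14 (le_of_lt hy34)
    have hE : x*y/4 ≤ E := by
      rw [hEdef]
      have : y * (x/2) ≤ x ^ ((1:ℝ)/4) * y ^ ((3:ℝ)/4) * (x - y) := by
        apply mul_le_mul hkey (by linarith) (by linarith) (by positivity)
      linarith
    have h2 : dn * dm / E ≤ dn * dm / (x*y/4) :=
      div_le_div_of_nonneg_left (mul_nonneg hdn hdm)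
        (div_pos (mul_pos hx0 hy0) (by norm_num)) hE
    have h3 : dn * dm / (x*y/4) ≤ 2*dn^2/(x*y) + 2*dm^2/(x*y) := by
      have hxy0 : 0 < x*y := mul_pos hx0 hy0
      rw [div_div_eq_mul_div, ← add_div]
      exact div_le_div_of_nonneg_right (by nlinarith [hsq]) (le_of_lt hxy0)
    linarith
  · -- y large: E ≥ x*(x-y)/4
    have h234 : (2:ℝ) ^ ((3:ℝ)/4) ≤ 2 := by
      calc (2:ℝ) ^ ((3:ℝ)/4) ≤ (2:ℝ) ^ (1:ℝ) :=
        Real.rpow_le_rpow_of_exponent_le (by norm_num) (by norm_num)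
        _ = 2 := Real.rpow_one 2
    have hhalf : (x/2) ^ ((3:ℝ)/4) ≤ y ^ ((3:ℝ)/4) :=
      Real.rpow_le_rpow (by positivity) (by linarith) (by norm_num)
    have hdivpow : (x/2) ^ ((3:ℝ)/4) = x ^ ((3:ℝ)/4) / 2 ^ ((3:ℝ)/4) :=
      Real.div_rpow (le_of_lt hx0) (by norm_num) ((3:ℝ)/4)
    have hkey : x ^ ((3:ℝ)/4) / 2 ≤ y ^ ((3:ℝ)/4) := by
      refine le_trans ?_ hhalf
      rw [hdivpow]
      exact div_le_div_of_nonneg_left (le_of_lt hx34) (by positivity) h234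
    have hx1434 : x ^ ((1:ℝ)/4) * x ^ ((3:ℝ)/4) = x := by
      rw [← Real.rpow_add hx0]; norm_num
    have hE : x*(x-y)/4 ≤ E := by
      rw [hEdef]
      have h5 : x/2 ≤ x ^ ((1:ℝ)/4) * y ^ ((3:ℝ)/4) := by
        calc x/2 = x ^ ((1:ℝ)/4) * (x ^ ((3:ℝ)/4) / 2) := by rw [← mul_div_assoc, hx1434]
          _ ≤ x ^ ((1:ℝ)/4) * y ^ ((3:ℝ)/4) :=
            mul_le_mul_of_nonneg_left hkey (le_of_lt hx14)
      have : (x/2) * (x-y) ≤ x ^ ((1:ℝ)/4) * y ^ ((3:ℝ)/4) * (x - y) :=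
        mul_le_mul_of_nonneg_right h5 (le_of_lt hd)
      linarith
    have h2 : dn * dm / E ≤ dn * dm / (x*(x-y)/4) :=
      div_le_div_of_nonneg_left (mul_nonneg hdn hdm)
        (div_pos (mul_pos hx0 hd) (by norm_num)) hE
    have h3 : dn * dm / (x*(x-y)/4) ≤ 2*dn^2/(x*(x-y)) + 2*dm^2/(y*(x-y)) := by
      have hxd : 0 < x*(x-y) := mul_pos hx0 hd
      have hyd : 0 < y*(x-y) := mul_pos hy0 hd
      have hb : 2*dm^2/(x*(x-y)) ≤ 2*dm^2/(y*(x-y)) := by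
        apply div_le_div_of_nonneg_left (by positivity) hyd
        exact mul_le_mul_of_nonneg_right (le_of_lt hxy) (le_of_lt hd)
      have hcc : dn * dm / (x*(x-y)/4) ≤ 2*dn^2/(x*(x-y)) + 2*dm^2/(x*(x-y)) := by
        rw [div_div_eq_mul_div, ← add_div]
        exact div_le_div_of_nonneg_right (by nlinarith [hsq]) (le_of_lt hxd)
      linarith
    linarith

lemma harm_def (N : ℕ) : harm N = ∑ k ∈ Finset.Icc 1 N, (1:ℝ)/k := rfl

lemma sum_inv_sub_le (n N : ℕ) (hn : n ≤ N) :
    ∑ m ∈ Finset.Ico 1 n, (1:ℝ)/((n:ℝ)-(m:ℝ)) ≤ harm N := by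
  have e : ∑ m ∈ Finset.Ico 1 n, (1:ℝ)/((n:ℝ)-(m:ℝ)) = ∑ k ∈ Finset.Ico 1 n, (1:ℝ)/k := by
    refine Finset.sum_nbij' (fun m => n - m) (fun k => n - k) ?_ ?_ ?_ ?_ ?_
    · intro m hm; simp only [Finset.mem_Ico] at hm ⊢; omega
    · intro k hk; simp only [Finset.mem_Ico] at hk ⊢; omega
    · intro m hm; simp only [Finset.mem_Ico] at hm; show n - (n - m) = m; omega
    · intro k hk; simp only [Finset.mem_Ico] at hk; show n - (n - k) = k; omega
    · intro m hm
      simp only [Finset.mem_Ico] at hm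
      rw [Nat.cast_sub (by omega)]
  rw [e, harm_def]
  exact Finset.sum_le_sum_of_subset_of_nonneg
    (by intro k hk; simp only [Finset.mem_Ico, Finset.mem_Icc] at *; omega)
    (fun k _ _ => by positivity)

lemma sum_inv_sub_le' (m N : ℕ) :
    ∑ n ∈ Finset.Ico (m+1) (N+1), (1:ℝ)/((n:ℝ)-(m:ℝ)) ≤ harm N := by
  have e : ∑ n ∈ Finset.Ico (m+1) (N+1), (1:ℝ)/((n:ℝ)-(m:ℝ))
      = ∑ k ∈ Finset.Ico 1 (N+1-m), (1:ℝ)/k := by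
    refine Finset.sum_nbij' (fun n => n - m) (fun k => k + m) ?_ ?_ ?_ ?_ ?_
    · intro a ha; simp only [Finset.mem_Ico] at ha ⊢; omega
    · intro k hk; simp only [Finset.mem_Ico] at hk ⊢; omega
    · intro a ha; simp only [Finset.mem_Ico] at ha; show a - m + m = a; omega
    · intro k hk; simp only [Finset.mem_Ico] at hk; show k + m - m = k; omega
    · intro a ha
      simp only [Finset.mem_Ico] at ha
      rw [Nat.cast_sub (by omega)]
  rw [e, harm_def]
  exact Finset.sum_le_sum_of_subset_of_nonneg
    (by intro k hk; simp only [Finset.mem_Ico, Finset.mem_Icc] at *; omega)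
    (fun k _ _ => by positivity)

set_option maxHeartbeats 1000000 in
lemma main_sum (N : ℕ) :
    (∑ n ∈ Finset.Icc 1 N, ∑ m ∈ Finset.Ico 1 n,
      (divfun n : ℝ) * (divfun m : ℝ) /
        (((n : ℝ) * (m : ℝ)) ^ ((3 : ℝ) / 4) * (Real.sqrt n - Real.sqrt m)))
    ≤ 8 * harm N ^ 5 := by
  have step1 : (∑ n ∈ Finset.Icc 1 N, ∑ m ∈ Finset.Ico 1 n,
      (divfun n : ℝ) * (divfun m : ℝ) /
        (((n : ℝ) * (m : ℝ)) ^ ((3 : ℝ) / 4) * (Real.sqrt n - Real.sqrt m)))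
      ≤ ∑ n ∈ Finset.Icc 1 N, ∑ m ∈ Finset.Ico 1 n,
        (2*(divfun n:ℝ)^2/((n:ℝ)*m) + 2*(divfun n:ℝ)^2/((n:ℝ)*((n:ℝ)-(m:ℝ)))
          + 2*(divfun m:ℝ)^2/((n:ℝ)*m) + 2*(divfun m:ℝ)^2/((m:ℝ)*((n:ℝ)-(m:ℝ)))) :=
    Finset.sum_le_sum fun n _ => Finset.sum_le_sum fun m hm => by
      simp only [Finset.mem_Ico] at hm
      exact pointwise n m hm.1 hm.2
  refine le_trans step1 ?_
  simp only [Finset.sum_add_distrib]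
  have hS1 : ∑ n ∈ Finset.Icc 1 N, ∑ m ∈ Finset.Ico 1 n,
      2*(divfun n:ℝ)^2/((n:ℝ)*m) ≤ 2 * harm N ^ 5 := by
    have inner : ∀ n ∈ Finset.Icc 1 N, ∑ m ∈ Finset.Ico 1 n, 2*(divfun n:ℝ)^2/((n:ℝ)*m)
        ≤ (2*(divfun n:ℝ)^2/(n:ℝ)) * harm N := by
      intro n hn
      simp only [Finset.mem_Icc] at hn
      have e : ∀ m : ℕ, 2*(divfun n:ℝ)^2/((n:ℝ)*m)
          = (2*(divfun n:ℝ)^2/(n:ℝ)) * ((1:ℝ)/m) := fun m => by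
        rw [mul_one_div, div_div]
      rw [Finset.sum_congr rfl fun m _ => e m, ← Finset.mul_sum]
      refine mul_le_mul_of_nonneg_left ?_ (by positivity)
      rw [harm_def]
      exact Finset.sum_le_sum_of_subset_of_nonneg
        (by intro k hk; simp only [Finset.mem_Ico, Finset.mem_Icc] at *; omega)
        (fun k _ _ => by positivity)
    refine le_trans (Finset.sum_le_sum inner) ?_
    have e2 : ∑ n ∈ Finset.Icc 1 N, (2*(divfun n:ℝ)^2/(n:ℝ)) * harm N
        = 2 * harm N * ∑ n ∈ Finset.Icc 1 N, (divfun n:ℝ)^2/(n:ℝ) := by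
      rw [Finset.mul_sum]
      exact Finset.sum_congr rfl fun n _ => by ring
    rw [e2]
    calc 2 * harm N * ∑ n ∈ Finset.Icc 1 N, (divfun n:ℝ)^2/(n:ℝ)
        ≤ 2 * harm N * harm N ^ 4 := mul_le_mul_of_nonneg_left (divsum_le N)
          (mul_nonneg (by norm_num) (harm_nonneg N))
      _ = 2 * harm N ^ 5 := by ring
  have hS2 : ∑ n ∈ Finset.Icc 1 N, ∑ m ∈ Finset.Ico 1 n,
      2*(divfun n:ℝ)^2/((n:ℝ)*((n:ℝ)-(m:ℝ))) ≤ 2 * harm N ^ 5 := by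
    have inner : ∀ n ∈ Finset.Icc 1 N, ∑ m ∈ Finset.Ico 1 n,
        2*(divfun n:ℝ)^2/((n:ℝ)*((n:ℝ)-(m:ℝ)))
        ≤ (2*(divfun n:ℝ)^2/(n:ℝ)) * harm N := by
      intro n hn
      simp only [Finset.mem_Icc] at hn
      have e : ∀ m : ℕ, 2*(divfun n:ℝ)^2/((n:ℝ)*((n:ℝ)-(m:ℝ)))
          = (2*(divfun n:ℝ)^2/(n:ℝ)) * ((1:ℝ)/((n:ℝ)-(m:ℝ))) := fun m => by
        rw [mul_one_div, div_div]
      rw [Finset.sum_congr rfl fun m _ => e m, ← Finset.mul_sum]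
      exact mul_le_mul_of_nonneg_left (sum_inv_sub_le n N hn.2) (by positivity)
    refine le_trans (Finset.sum_le_sum inner) ?_
    have e2 : ∑ n ∈ Finset.Icc 1 N, (2*(divfun n:ℝ)^2/(n:ℝ)) * harm N
        = 2 * harm N * ∑ n ∈ Finset.Icc 1 N, (divfun n:ℝ)^2/(n:ℝ) := by
      rw [Finset.mul_sum]
      exact Finset.sum_congr rfl fun n _ => by ring
    rw [e2]
    calc 2 * harm N * ∑ n ∈ Finset.Icc 1 N, (divfun n:ℝ)^2/(n:ℝ)
        ≤ 2 * harm N * harm N ^ 4 := mul_le_mul_of_nonneg_left (divsum_le N)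
          (mul_nonneg (by norm_num) (harm_nonneg N))
      _ = 2 * harm N ^ 5 := by ring
  have hS3 : ∑ n ∈ Finset.Icc 1 N, ∑ m ∈ Finset.Ico 1 n,
      2*(divfun m:ℝ)^2/((n:ℝ)*m) ≤ 2 * harm N ^ 5 := by
    have inner : ∀ n ∈ Finset.Icc 1 N, ∑ m ∈ Finset.Ico 1 n, 2*(divfun m:ℝ)^2/((n:ℝ)*m)
        ≤ (2/(n:ℝ)) * harm N ^ 4 := by
      intro n hn
      simp only [Finset.mem_Icc] at hn
      have e : ∀ m : ℕ, 2*(divfun m:ℝ)^2/((n:ℝ)*m)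
          = (2/(n:ℝ)) * ((divfun m:ℝ)^2/(m:ℝ)) := fun m => by
        rw [div_mul_div_comm]
      rw [Finset.sum_congr rfl fun m _ => e m, ← Finset.mul_sum]
      refine mul_le_mul_of_nonneg_left ?_ (by positivity)
      refine le_trans (Finset.sum_le_sum_of_subset_of_nonneg
        (by intro k hk; simp only [Finset.mem_Ico, Finset.mem_Icc] at *; omega)
        (fun k _ _ => by positivity)) (divsum_le N)
    refine le_trans (Finset.sum_le_sum inner) ?_
    have e2 : ∑ n ∈ Finset.Icc 1 N, (2/(n:ℝ)) * harm N ^ 4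
        = 2 * harm N ^ 4 * ∑ n ∈ Finset.Icc 1 N, (1:ℝ)/(n:ℝ) := by
      rw [Finset.mul_sum]
      exact Finset.sum_congr rfl fun n _ => by ring
    rw [e2, ← harm_def]
    exact le_of_eq (by ring)
  have hS4 : ∑ n ∈ Finset.Icc 1 N, ∑ m ∈ Finset.Ico 1 n,
      2*(divfun m:ℝ)^2/((m:ℝ)*((n:ℝ)-(m:ℝ))) ≤ 2 * harm N ^ 5 := by
    rw [show Finset.Icc 1 N = Finset.Ico 1 (N+1) from (Finset.Ico_add_one_right_eq_Icc 1 N).symm,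
      ← Finset.sum_Ico_Ico_comm']
    have inner : ∀ m ∈ Finset.Ico 1 (N+1), ∑ n ∈ Finset.Ico (m+1) (N+1),
        2*(divfun m:ℝ)^2/((m:ℝ)*((n:ℝ)-(m:ℝ)))
        ≤ (2*(divfun m:ℝ)^2/(m:ℝ)) * harm N := by
      intro m hm
      simp only [Finset.mem_Ico] at hm
      have e : ∀ n : ℕ, 2*(divfun m:ℝ)^2/((m:ℝ)*((n:ℝ)-(m:ℝ)))
          = (2*(divfun m:ℝ)^2/(m:ℝ)) * ((1:ℝ)/((n:ℝ)-(m:ℝ))) := fun n => by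
        rw [mul_one_div, div_div]
      rw [Finset.sum_congr rfl fun n _ => e n, ← Finset.mul_sum]
      exact mul_le_mul_of_nonneg_left (sum_inv_sub_le' m N) (by positivity)
    refine le_trans (Finset.sum_le_sum inner) ?_
    rw [show Finset.Ico 1 (N+1) = Finset.Icc 1 N from Finset.Ico_add_one_right_eq_Icc 1 N]
    have e2 : ∑ m ∈ Finset.Icc 1 N, (2*(divfun m:ℝ)^2/(m:ℝ)) * harm N
        = 2 * harm N * ∑ m ∈ Finset.Icc 1 N, (divfun m:ℝ)^2/(m:ℝ) := by
      rw [Finset.mul_sum]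
      exact Finset.sum_congr rfl fun m _ => by ring
    rw [e2]
    calc 2 * harm N * ∑ m ∈ Finset.Icc 1 N, (divfun m:ℝ)^2/(m:ℝ)
        ≤ 2 * harm N * harm N ^ 4 := mul_le_mul_of_nonneg_left (divsum_le N)
          (mul_nonneg (by norm_num) (harm_nonneg N))
      _ = 2 * harm N ^ 5 := by ring
  linarith

theorem divisor_double_sum_bound :
    ∃ C : ℝ, 0 < C ∧ ∀ T : ℝ, 2 ≤ T →
      (∑ n ∈ Finset.Icc 1 ⌊T⌋₊, ∑ m ∈ Finset.Ico 1 n,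
          (divfun n : ℝ) * (divfun m : ℝ) /
            (((n : ℝ) * (m : ℝ)) ^ ((3 : ℝ) / 4) * (Real.sqrt n - Real.sqrt m))) ≤
        C * Real.log T ^ 5 := by
  have hlog2 : 0 < Real.log 2 := Real.log_pos (by norm_num)
  refine ⟨8 * (1 + 1/Real.log 2)^5, by positivity, ?_⟩
  intro T hT
  set N := ⌊T⌋₊ with hN
  have hT0 : (0:ℝ) < T := by linarith
  have hlogT : Real.log 2 ≤ Real.log T := Real.log_le_log (by norm_num) hT
  have hlogT0 : 0 < Real.log T := lt_of_lt_of_le hlog2 hlogT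
  have hharm : harm N ≤ 1 + Real.log T := by
    refine le_trans (harm_le N) ?_
    have h1 : (N:ℝ) ≤ T := Nat.floor_le (le_of_lt hT0)
    rcases Nat.eq_zero_or_pos N with h0 | hpos
    · simp only [h0, Nat.cast_zero, Real.log_zero]
      linarith
    · have h2 : Real.log N ≤ Real.log T :=
        Real.log_le_log (by exact_mod_cast hpos) h1
      linarith
  have hharm0 : 0 ≤ harm N := harm_nonneg N
  have h1T : (0:ℝ) ≤ 1 + Real.log T := by linarith
  have hfin : 1 + Real.log T ≤ (1 + 1/Real.log 2) * Real.log T := by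
    have hq : 1 ≤ Real.log T / Real.log 2 := (one_le_div hlog2).2 hlogT
    calc 1 + Real.log T ≤ Real.log T/Real.log 2 + Real.log T := by linarith
      _ = (1 + 1/Real.log 2) * Real.log T := by field_simp; ring
  calc (∑ n ∈ Finset.Icc 1 N, ∑ m ∈ Finset.Ico 1 n,
          (divfun n : ℝ) * (divfun m : ℝ) /
            (((n : ℝ) * (m : ℝ)) ^ ((3 : ℝ) / 4) * (Real.sqrt n - Real.sqrt m)))
      ≤ 8 * harm N ^ 5 := main_sum N
    _ ≤ 8 * (1 + Real.log T) ^ 5 := by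
        have := pow_le_pow_left₀ hharm0 hharm 5
        linarith
    _ ≤ 8 * ((1 + 1/Real.log 2) * Real.log T) ^ 5 := by
        have := pow_le_pow_left₀ h1T hfin 5
        linarith
    _ = 8 * (1 + 1/Real.log 2)^5 * Real.log T ^ 5 := by ring
end
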